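/- Let μ be a Radon measure on ℝ^d satisfying the growth condition, 1 < η ≤ α < ∞, β > α^d. If f ∈ rbmo(μ) (Yang's local RBMO space), then f ∈ RBMO(μ) (Tolsa's space) and ‖f‖_{RBMO(μ)} ≤ C ‖f‖_{rbmo(μ)}. -/

import Mathlib

open MeasureTheory ENNReal

structure Cube (d : ℕ) where
  center : Fin d → ℝ
  side : ℝ

namespace Cube

/-- The closed axis-parallel cube with the given center and side length. -/
def toSet {d : ℕ} (Q : Cube d) : Set (Fin d → ℝ) :=
  {y | ∀ i, |y i - Q.center i| ≤ Q.side / 2}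

/-- The concentric dilate `ηQ`. -/
def dilate {d : ℕ} (η : ℝ) (Q : Cube d) : Cube d :=
  ⟨Q.center, η * Q.side⟩

end Cube

/-- The growth condition `μ(Q(x,l)) ≤ C₀ l^n`. -/
def GrowthCondition {d : ℕ} (μ : Measure (Fin d → ℝ)) (C₀ n : ℝ) : Prop :=
  ∀ (x : Fin d → ℝ) (l : ℝ), 0 < l →
    μ (Cube.toSet ⟨x, l⟩) ≤ ENNReal.ofReal (C₀ * l ^ n)

/-- A cube `Q` is `(α,β)`-doubling if `μ(αQ) ≤ β μ(Q)`. -/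
def IsDoubling {d : ℕ} (μ : Measure (Fin d → ℝ)) (α β : ℝ) (Q : Cube d) : Prop :=
  μ (Q.dilate α).toSet ≤ ENNReal.ofReal β * μ Q.toSet

/-- `N_{Q,R}`: the first positive integer `k` with `l(2^k Q) ≥ l(R)`. -/
noncomputable def NQR {d : ℕ} (Q R : Cube d) : ℕ :=
  sInf {k : ℕ | 0 < k ∧ R.side ≤ 2 ^ k * Q.side}

/-- The coefficient `K_{Q,R} = 1 + ∑_{k=1}^{N_{Q,R}} μ(2^k Q)/l(2^k Q)^n`. -/
noncomputable def Kcoef {d : ℕ} (μ : Measure (Fin d → ℝ)) (n : ℝ) (Q R : Cube d) : ℝ :=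
  1 + ∑ k ∈ Finset.Icc 1 (NQR Q R),
    (μ ((Q.dilate (2 ^ k)).toSet)).toReal / ((2 ^ k * Q.side) ^ n)

/-- The μ-average `m_Q f` of `f` over a cube `Q`. -/
noncomputable def cubeAvg {d : ℕ} (μ : Measure (Fin d → ℝ))
    (f : (Fin d → ℝ) → ℝ) (Q : Cube d) : ℝ :=
  (∫ x in Q.toSet, f x ∂μ) / (μ Q.toSet).toReal

/-- The exponent of the smallest expansive concentric `(α,β)`-doubling cube. -/
noncomputable def expIdx {d : ℕ} (μ : Measure (Fin d → ℝ)) (α β : ℝ) (Q : Cube d) : ℕ :=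
  sInf {m : ℕ | IsDoubling μ α β (Q.dilate (α ^ m))}

/-- `Q̃`, the smallest expansive concentric `(α,β)`-doubling cube of `Q`. -/
noncomputable def tilde {d : ℕ} (μ : Measure (Fin d → ℝ)) (α β : ℝ) (Q : Cube d) : Cube d :=
  Q.dilate (α ^ expIdx μ α β Q)

/-- The exponent of the biggest contractive concentric `(α,β)`-doubling cube. -/
noncomputable def conIdx {d : ℕ} (μ : Measure (Fin d → ℝ)) (α β : ℝ) (Q : Cube d) : ℕ :=
  sInf {N : ℕ | IsDoubling μ α β (Q.dilate (α ^ (-(N : ℤ))))}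

/-- `Q'`, the biggest contractive concentric `(α,β)`-doubling cube of `Q`. -/
noncomputable def prim {d : ℕ} (μ : Measure (Fin d → ℝ)) (α β : ℝ) (Q : Cube d) : Cube d :=
  Q.dilate (α ^ (-(conIdx μ α β Q : ℤ)))
/-- The defining conditions of Tolsa's `RBMO(μ)` with constant `C`. -/
def RBMOBound {d : ℕ} (μ : Measure (Fin d → ℝ)) (n α β η : ℝ)
    (f : (Fin d → ℝ) → ℝ) (C : ℝ) : Prop :=
  (∀ Q : Cube d, 0 < Q.side →
    ∫ x in Q.toSet, |f x - cubeAvg μ f (tilde μ α β Q)| ∂μ ≤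
      C * (μ (Q.dilate η).toSet).toReal) ∧
  (∀ Q R : Cube d, 0 < Q.side → Q.toSet ⊆ R.toSet →
    IsDoubling μ α β Q → IsDoubling μ α β R →
    |cubeAvg μ f Q - cubeAvg μ f R| ≤ C * Kcoef μ n Q R)

/-- The defining conditions of Yang's local space `rbmo(μ)` with constant `C`. -/
def RbmoBound {d : ℕ} (μ : Measure (Fin d → ℝ)) (n α β η : ℝ)
    (f : (Fin d → ℝ) → ℝ) (C : ℝ) : Prop :=
  (∀ Q : Cube d, 0 < Q.side → Q.side ≤ 1 →
    ∫ x in Q.toSet, |f x - cubeAvg μ f (tilde μ α β Q)| ∂μ ≤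
      C * (μ (Q.dilate η).toSet).toReal) ∧
  (∀ Q R : Cube d, 0 < Q.side → Q.side ≤ 1 → Q.toSet ⊆ R.toSet →
    IsDoubling μ α β Q → IsDoubling μ α β R →
    |cubeAvg μ f Q - cubeAvg μ f R| ≤ C * Kcoef μ n Q R) ∧
  (∀ Q : Cube d, 1 < Q.side →
    ∫ x in Q.toSet, |f x| ∂μ ≤ C * (μ (Q.dilate η).toSet).toReal)

section Helpers

open Real

lemma l_cube_Icc {d : ℕ} (Q : Cube d) :
    Q.toSet = Set.Icc (fun i => Q.center i - Q.side / 2) (fun i => Q.center i + Q.side / 2) := by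
  ext y
  simp only [Cube.toSet, Set.mem_setOf_eq, Set.mem_Icc, Pi.le_def, abs_le]
  constructor
  · intro h
    exact ⟨fun i => by linarith [(h i).1], fun i => by linarith [(h i).2]⟩
  · intro h i
    exact ⟨by linarith [h.1 i], by linarith [h.2 i]⟩

lemma l_cube_compact {d : ℕ} (Q : Cube d) : IsCompact Q.toSet := by
  rw [l_cube_Icc]; exact isCompact_Icc

lemma l_meas_lt_top {d : ℕ} (μ : Measure (Fin d → ℝ)) [IsLocallyFiniteMeasure μ]
    (Q : Cube d) : μ Q.toSet < ⊤ :=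
  (l_cube_compact Q).measure_lt_top

lemma l_dilate_mono {d : ℕ} (Q : Cube d) {a b : ℝ} (hab : a ≤ b) (hs : 0 ≤ Q.side) :
    (Q.dilate a).toSet ⊆ (Q.dilate b).toSet := by
  intro y hy i
  refine (hy i).trans ?_
  simp only [Cube.dilate]
  nlinarith

lemma l_subset_dilate {d : ℕ} (Q : Cube d) {a : ℝ} (ha : 1 ≤ a) (hs : 0 ≤ Q.side) :
    Q.toSet ⊆ (Q.dilate a).toSet := by
  intro y hy i
  refine (hy i).trans ?_
  simp only [Cube.dilate]
  nlinarith

lemma l_K_ge_one {d : ℕ} (μ : Measure (Fin d → ℝ)) (n : ℝ) (Q R : Cube d)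
    (hs : 0 < Q.side) : 1 ≤ Kcoef μ n Q R := by
  unfold Kcoef
  refine le_add_of_nonneg_right (Finset.sum_nonneg fun k _ => ?_)
  exact div_nonneg ENNReal.toReal_nonneg (Real.rpow_nonneg (by positivity) n)

lemma l_avg_bound {d : ℕ} (μ : Measure (Fin d → ℝ)) [IsLocallyFiniteMeasure μ]
    {α β η : ℝ} (f : (Fin d → ℝ) → ℝ) {C₂ : ℝ} (hC₂ : 0 ≤ C₂) (hβ0 : 0 ≤ β)
    (hηα : η ≤ α) (Q : Cube d) (hs : 0 ≤ Q.side)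
    (hdoub : IsDoubling μ α β Q)
    (hint : ∫ x in Q.toSet, |f x| ∂μ ≤ C₂ * (μ (Q.dilate η).toSet).toReal) :
    |cubeAvg μ f Q| ≤ C₂ * β := by
  have hM0 : 0 ≤ (μ Q.toSet).toReal := ENNReal.toReal_nonneg
  rcases hM0.eq_or_lt with hM | hM
  · rw [cubeAvg, ← hM]
    rw [_root_.div_zero, abs_zero]
    positivity
  · have hsub : (Q.dilate η).toSet ⊆ (Q.dilate α).toSet := l_dilate_mono Q hηα hs
    have h1 : μ (Q.dilate η).toSet ≤ ENNReal.ofReal β * μ Q.toSet :=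
      (measure_mono hsub).trans hdoub
    have h2 : (μ (Q.dilate η).toSet).toReal ≤ β * (μ Q.toSet).toReal := by
      have := ENNReal.toReal_mono
        (ENNReal.mul_ne_top ENNReal.ofReal_ne_top (l_meas_lt_top μ Q).ne) h1
      rwa [ENNReal.toReal_mul, ENNReal.toReal_ofReal hβ0] at this
    have habs : |∫ x in Q.toSet, f x ∂μ| ≤ ∫ x in Q.toSet, |f x| ∂μ := by
      simpa [Real.norm_eq_abs] using
        norm_integral_le_integral_norm (μ := μ.restrict Q.toSet) f
    have h3 : |∫ x in Q.toSet, f x ∂μ| ≤ C₂ * (β * (μ Q.toSet).toReal) :=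
      habs.trans (hint.trans (mul_le_mul_of_nonneg_left h2 hC₂))
    rw [cubeAvg, abs_div, abs_of_nonneg hM0, div_le_iff₀ hM]
    nlinarith [h3]

lemma l_exists_doubling {d : ℕ} (μ : Measure (Fin d → ℝ)) [IsLocallyFiniteMeasure μ]
    {C₀ n α β : ℝ} (hC₀ : 0 < C₀) (hn : 0 < n) (hnd : n ≤ d)
    (hgrowth : GrowthCondition μ C₀ n) (hα1 : 1 < α) (hβ : α ^ d < β)
    (Q : Cube d) (hs : 0 < Q.side) :
    ∃ m : ℕ, IsDoubling μ α β (Q.dilate (α ^ m)) := by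
  by_contra hcon
  push_neg at hcon
  have hα0 : (0:ℝ) < α := lt_trans one_pos hα1
  have hβ0 : (0:ℝ) < β := lt_of_lt_of_le (by positivity) hβ.le
  have hcube : ∀ m : ℕ, ((Q.dilate (α ^ m)).dilate α) = Q.dilate (α ^ (m + 1)) := by
    intro m
    simp only [Cube.dilate, pow_succ]
    congr 1
    ring
  set g : ℕ → ℝ := fun m => (μ (Q.dilate (α ^ m)).toSet).toReal with hg
  have hfin : ∀ m, μ (Q.dilate (α ^ m)).toSet ≠ ⊤ := fun m => (l_meas_lt_top μ _).ne
  have hgnn : ∀ m, 0 ≤ g m := fun m => ENNReal.toReal_nonneg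
  have hstep : ∀ m, β * g m < g (m + 1) := by
    intro m
    have h1 : ¬(μ ((Q.dilate (α ^ m)).dilate α).toSet ≤
        ENNReal.ofReal β * μ (Q.dilate (α ^ m)).toSet) := hcon m
    rw [hcube m] at h1
    have h2 := lt_of_not_ge h1
    have h3 := ENNReal.toReal_strict_mono (hfin (m + 1)) h2
    rwa [ENNReal.toReal_mul, ENNReal.toReal_ofReal hβ0.le] at h3
  have hind : ∀ m : ℕ, β ^ m * g 1 ≤ g (m + 1) := by
    intro m
    induction m with
    | zero => simp
    | succ k ih =>
      calc β ^ (k + 1) * g 1 = β * (β ^ k * g 1) := by ring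
        _ ≤ β * g (k + 1) := mul_le_mul_of_nonneg_left ih hβ0.le
        _ ≤ g (k + 2) := (hstep (k + 1)).le
  have hg1 : 0 < g 1 := by nlinarith [hstep 0, hgnn 0]
  have hA : (0:ℝ) < α ^ n := Real.rpow_pos_of_pos hα0 n
  have hAβ : α ^ n < β := by
    refine lt_of_le_of_lt ?_ hβ
    calc α ^ n ≤ α ^ (d : ℝ) := Real.rpow_le_rpow_of_exponent_le hα1.le hnd
      _ = α ^ d := Real.rpow_natCast α d
  have hub : ∀ m : ℕ, g (m + 1) ≤ C₀ * Q.side ^ n * ((α ^ n) ^ (m + 1)) := by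
    intro m
    have hl : 0 < α ^ (m + 1) * Q.side := by positivity
    have h1 := hgrowth Q.center (α ^ (m + 1) * Q.side) hl
    have h2 : g (m + 1) ≤ C₀ * (α ^ (m + 1) * Q.side) ^ n :=
      ENNReal.toReal_le_of_le_ofReal (by positivity) h1
    have h3 : (α ^ (m + 1) * Q.side) ^ n = (α ^ n) ^ (m + 1) * Q.side ^ n := by
      rw [Real.mul_rpow (by positivity) hs.le]
      congr 1
      rw [← Real.rpow_natCast α (m + 1), ← Real.rpow_natCast (α ^ n) (m + 1),
        ← Real.rpow_mul hα0.le, ← Real.rpow_mul hα0.le, mul_comm]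
    rw [h3] at h2
    nlinarith [h2]
  obtain ⟨m, hm⟩ := pow_unbounded_of_one_lt (C₀ * Q.side ^ n * (α ^ n) / g 1)
    ((one_lt_div hA).mpr hAβ)
  have hkey : (β / α ^ n) ^ m ≤ C₀ * Q.side ^ n * (α ^ n) / g 1 := by
    rw [div_pow, div_le_div_iff₀ (pow_pos hA m) hg1]
    calc β ^ m * g 1 ≤ g (m + 1) := hind m
      _ ≤ C₀ * Q.side ^ n * ((α ^ n) ^ (m + 1)) := hub m
      _ = C₀ * Q.side ^ n * (α ^ n) * (α ^ n) ^ m := by ring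
  linarith

end Helpers

theorem stmt14 {d : ℕ} (μ : Measure (Fin d → ℝ)) [IsLocallyFiniteMeasure μ]
    (C₀ n α β η : ℝ)
    (hC₀ : 0 < C₀) (hn : 0 < n) (hnd : n ≤ d) (hgrowth : GrowthCondition μ C₀ n)
    (hη : 1 < η) (hηα : η ≤ α) (hβ : α ^ d < β) :
    ∃ C : ℝ, 0 < C ∧ ∀ (f : (Fin d → ℝ) → ℝ) (C₂ : ℝ), 0 ≤ C₂ →
      LocallyIntegrable f μ → RbmoBound μ n α β η f C₂ →
      RBMOBound μ n α β η f (C * C₂) := by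
  have hα1 : 1 < α := lt_of_lt_of_le hη hηα
  have hα0 : (0:ℝ) < α := lt_trans one_pos hα1
  have hβ0 : (0:ℝ) < β := lt_of_lt_of_le (by positivity) hβ.le
  refine ⟨2 * β + 2, by linarith, ?_⟩
  intro f C₂ hC₂ hf hrbmo
  obtain ⟨h1, h2, h3⟩ := hrbmo
  constructor
  · -- first condition
    intro Q hQs
    have hμηQnn : 0 ≤ (μ (Q.dilate η).toSet).toReal := ENNReal.toReal_nonneg
    rcases le_or_gt Q.side 1 with hQ1 | hQ1
    · refine (h1 Q hQs hQ1).trans ?_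
      nlinarith [mul_nonneg hC₂ hμηQnn]
    · -- large cube
      have hne : ∃ m : ℕ, IsDoubling μ α β (Q.dilate (α ^ m)) :=
        l_exists_doubling μ hC₀ hn hnd hgrowth hα1 hβ Q hQs
      have hdT : IsDoubling μ α β (tilde μ α β Q) := Nat.sInf_mem hne
      have hTside : (tilde μ α β Q).side = α ^ expIdx μ α β Q * Q.side := rfl
      have h1e : (1:ℝ) ≤ α ^ expIdx μ α β Q := by
        calc (1:ℝ) = 1 ^ expIdx μ α β Q := (one_pow _).symm
          _ ≤ α ^ expIdx μ α β Q := pow_le_pow_left₀ zero_le_one hα1.le _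
      have hT1 : 1 < (tilde μ α β Q).side := by rw [hTside]; nlinarith
      have havgT : |cubeAvg μ f (tilde μ α β Q)| ≤ C₂ * β :=
        l_avg_bound μ f hC₂ hβ0.le hηα _ (by linarith) hdT (h3 _ hT1)
      set cT := cubeAvg μ f (tilde μ α β Q) with hcT
      have hfQ : IntegrableOn f Q.toSet μ := hf.integrableOn_isCompact (l_cube_compact Q)
      have hconst : IntegrableOn (fun _ => cT) Q.toSet μ :=
        integrableOn_const (l_meas_lt_top μ Q).ne
      have hμmono : (μ Q.toSet).toReal ≤ (μ (Q.dilate η).toSet).toReal :=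
        ENNReal.toReal_mono (l_meas_lt_top μ (Q.dilate η)).ne
          (measure_mono (l_subset_dilate Q hη.le hQs.le))
      calc ∫ x in Q.toSet, |f x - cT| ∂μ
          ≤ ∫ x in Q.toSet, (|f x| + |cT|) ∂μ := by
            refine integral_mono ((hfQ.sub hconst).abs) (hfQ.abs.add hconst.abs) fun x => ?_
            rw [sub_eq_add_neg]
            exact (abs_add_le _ _).trans (by rw [abs_neg])
        _ = (∫ x in Q.toSet, |f x| ∂μ) + |cT| * (μ Q.toSet).toReal := by
            rw [integral_add hfQ.abs hconst.abs, setIntegral_const, smul_eq_mul, mul_comm, Measure.real]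
        _ ≤ C₂ * (μ (Q.dilate η).toSet).toReal + (C₂ * β) * (μ (Q.dilate η).toSet).toReal := by
            refine add_le_add (h3 Q hQ1) ?_
            exact mul_le_mul havgT hμmono ENNReal.toReal_nonneg (by positivity)
        _ ≤ (2 * β + 2) * C₂ * (μ (Q.dilate η).toSet).toReal := by
            nlinarith [mul_nonneg hC₂ hμηQnn, mul_nonneg (mul_nonneg hβ0.le hC₂) hμηQnn]
  · -- second condition
    intro Q R hQs hsub hdQ hdR
    have hK : 1 ≤ Kcoef μ n Q R := l_K_ge_one μ n Q R hQs
    rcases le_or_gt Q.side 1 with hQ1 | hQ1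
    · refine (h2 Q R hQs hQ1 hsub hdQ hdR).trans ?_
      nlinarith [mul_nonneg hC₂ (le_trans zero_le_one hK)]
    · rcases Nat.eq_zero_or_pos d with hd | hd
      · subst hd
        have huniv : ∀ S : Cube 0, S.toSet = Set.univ := fun S =>
          Set.eq_univ_of_forall fun y i => i.elim0
        have : cubeAvg μ f Q = cubeAvg μ f R := by rw [cubeAvg, cubeAvg, huniv Q, huniv R]
        rw [this, sub_self, abs_zero]
        nlinarith [mul_nonneg hC₂ (le_trans zero_le_one hK)]
      · -- d ≥ 1 : R is also a large cube
        set i0 : Fin d := ⟨0, hd⟩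
        have hmem : ∀ t : ℝ, |t| ≤ Q.side / 2 →
            (fun i => if i = i0 then Q.center i + t else Q.center i) ∈ Q.toSet := by
          intro t ht i
          by_cases hi : i = i0
          · simp only [hi, if_pos]
            simpa using ht
          · simp only [if_neg hi, sub_self, abs_zero]
            positivity
        have habs : |Q.side / 2| ≤ Q.side / 2 := by rw [abs_of_nonneg (by linarith)]
        have habs' : |-(Q.side / 2)| ≤ Q.side / 2 := by
          rw [abs_neg, abs_of_nonneg (by linarith)]
        have hp1 := hsub (hmem (Q.side / 2) habs) i0
        have hp2 := hsub (hmem (-(Q.side / 2)) habs') i0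
        rw [if_pos rfl, abs_le] at hp1
        rw [if_pos rfl, abs_le] at hp2
        have hR1 : 1 < R.side := by
          have : Q.side ≤ R.side := by linarith [hp1.2, hp2.1]
          linarith
        have havgQ : |cubeAvg μ f Q| ≤ C₂ * β :=
          l_avg_bound μ f hC₂ hβ0.le hηα Q hQs.le hdQ (h3 Q hQ1)
        have havgR : |cubeAvg μ f R| ≤ C₂ * β :=
          l_avg_bound μ f hC₂ hβ0.le hηα R (by linarith) hdR (h3 R hR1)
        have htri : |cubeAvg μ f Q - cubeAvg μ f R| ≤
            |cubeAvg μ f Q| + |cubeAvg μ f R| := abs_sub _ _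
        have hCK : 2 * β * C₂ ≤ (2 * β + 2) * C₂ * Kcoef μ n Q R := by
          nlinarith [mul_nonneg hC₂ (le_trans zero_le_one hK),
            mul_nonneg hβ0.le (mul_nonneg hC₂ (le_trans zero_le_one hK))]
        calc |cubeAvg μ f Q - cubeAvg μ f R| ≤ C₂ * β + C₂ * β :=
              htri.trans (add_le_add havgQ havgR)
          _ = 2 * β * C₂ := by ring
          _ ≤ (2 * β + 2) * C₂ * Kcoef μ n Q R := hCK
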